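/- arXiv:2010.14024 — 3 statements merged into one kernel-verified Lean document; each statement's English description precedes it below -/
import Mathlib

section
/- Let R = ℤ or 𝔽_p[t], F its fraction field, K a finite separable extension of F, O_K the integral closure of R in K, T = {𝔭_1, …, 𝔭_n} a finite set of prime ideals of O_K, S its complement among all places (including the infinite ones), and O_{K,S} the corresponding holomorphy ring. Let L = L_div (resp. L_{div,t}) and let L̄ be obtained from L by removing | and adding binary relation symbols ≠, ‖, o_1, …, o_n, interpreted in O_{K,S} by: x ≠ y is inequality; x ‖ y iff x | y and y ≠ 0; o_i(x, y) iff x ≠ 0 and ord_{𝔭_i}(x) > ord_{𝔭_i}(y). Then for every existential L-formula φ(x̄) there exists a positive-existential L̄-formula φ̄(x̄) such that for every tuple c̄ over O_{K,S}, O_{K,S} ⊨ φ(c̄) if and only if O_{K,S} ⊨ φ̄(c̄). -/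
open FirstOrder Language IsDedekindDomain Polynomial

set_option linter.unusedSectionVars false

namespace Paper

/-- The divisibility relation symbol. -/
inductive DivRel : ℕ → Type
  | dvd : DivRel 2

instance : Encodable (Σ n, DivRel n) :=
  ⟨fun _ => 0, fun n => match n with | 0 => some ⟨2, .dvd⟩ | _ => none,
   by rintro ⟨n, r⟩; cases r; rfl⟩

/-- Function symbols of the language `L_div = {0, 1, +, =, |}`. -/
inductive DivFunc : ℕ → Type
  | zero : DivFunc 0
  | one : DivFunc 0
  | add : DivFunc 2

/-- The language `L_div = {0, 1, +, =, |}`. -/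
def Ldiv : Language := ⟨DivFunc, DivRel⟩

instance : Encodable (Σ n, DivFunc n) :=
  ⟨fun x => match x with
    | ⟨_, .zero⟩ => 0 | ⟨_, .one⟩ => 1 | ⟨_, .add⟩ => 2,
   fun n => match n with
    | 0 => some ⟨0, .zero⟩ | 1 => some ⟨0, .one⟩ | 2 => some ⟨2, .add⟩ | _ => none,
   by rintro ⟨n, f⟩; cases f <;> rfl⟩

instance : Encodable (Σ n, Ldiv.Functions n) :=
  inferInstanceAs (Encodable (Σ n, DivFunc n))

instance : Encodable (Σ n, Ldiv.Relations n) :=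
  inferInstanceAs (Encodable (Σ n, DivRel n))

/-- The `L_div`-structure on a commutative ring: `0`, `1`, `+` and divisibility. -/
def divStructure (R : Type*) [CommRing R] : Ldiv.Structure R where
  funMap {_} f := match f with
    | .zero => fun _ => 0
    | .one => fun _ => 1
    | .add => fun v => v 0 + v 1
  RelMap {_} r := match r with
    | .dvd => fun v => v 0 ∣ v 1

/-- Function symbols of `L_{div,t} = {0, 1, +, =, |, ·t}`. -/
inductive DivTFunc : ℕ → Type
  | zero : DivTFunc 0
  | one : DivTFunc 0
  | mulT : DivTFunc 1
  | add : DivTFunc 2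

/-- The language `L_{div,t} = {0, 1, +, =, |, ·t}`. -/
def LdivT : Language := ⟨DivTFunc, DivRel⟩

instance : Encodable (Σ n, DivTFunc n) :=
  ⟨fun x => match x with
    | ⟨_, .zero⟩ => 0 | ⟨_, .one⟩ => 1 | ⟨_, .mulT⟩ => 2 | ⟨_, .add⟩ => 3,
   fun n => match n with
    | 0 => some ⟨0, .zero⟩ | 1 => some ⟨0, .one⟩ | 2 => some ⟨1, .mulT⟩
    | 3 => some ⟨2, .add⟩ | _ => none,
   by rintro ⟨n, f⟩; cases f <;> rfl⟩

instance : Encodable (Σ n, LdivT.Functions n) :=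
  inferInstanceAs (Encodable (Σ n, DivTFunc n))

instance : Encodable (Σ n, LdivT.Relations n) :=
  inferInstanceAs (Encodable (Σ n, DivRel n))

/-- The `L_{div,t}`-structure on a commutative ring, where `·t` is interpreted as
multiplication by a fixed element `τ`. -/
def divTStructure (R : Type*) [CommRing R] (τ : R) : LdivT.Structure R where
  funMap {_} f := match f with
    | .zero => fun _ => 0
    | .one => fun _ => 1
    | .mulT => fun v => τ * v 0
    | .add => fun v => v 0 + v 1
  RelMap {_} r := match r with
    | .dvd => fun v => v 0 ∣ v 1

/-- A sentence is existential if it is the existential closure of a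
quantifier-free formula. -/
def IsExistentialSentence {L : Language} (φ : L.Sentence) : Prop :=
  ∃ (n : ℕ) (ψ : L.BoundedFormula Empty n), ψ.IsQF ∧ φ = ψ.exs

/-- A formula is existential if it is the existential closure of a
quantifier-free formula. -/
def IsExistentialFormula {L : Language} {α : Type*} (φ : L.Formula α) : Prop :=
  ∃ (n : ℕ) (ψ : L.BoundedFormula α n), ψ.IsQF ∧ φ = ψ.exs

/-- Gödel numbering of sentences, coming from Mathlib's encoding of bounded
formulas as lists of symbols. -/
noncomputable def sentenceEncode {L : Language}
    [Encodable (Σ n, L.Functions n)] [Encodable (Σ n, L.Relations n)]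
    (φ : L.Sentence) : ℕ :=
  Encodable.encode (BoundedFormula.listEncode φ)

/-- The theory of the `L`-structure `str` restricted to the sentences satisfying `P`
is decidable: there is a computable (total) function which, given the Gödel number
of a sentence satisfying `P`, decides whether the sentence holds in the structure. -/
def DecidesSentences {L : Language} {M : Type*} (str : L.Structure M)
    [Encodable (Σ n, L.Functions n)] [Encodable (Σ n, L.Relations n)]
    (P : L.Sentence → Prop) : Prop :=
  ∃ f : ℕ → Bool, Computable f ∧
    ∀ φ : L.Sentence, P φ → (f (sentenceEncode φ) = true ↔ @Sentence.Realize L M str φ)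

/-- Positive-existential formulas: built from atomic formulas (equalities and
relation assertions) using only conjunction, disjunction and existential
quantification. -/
inductive IsPosEx {L : Language} {α : Type*} : ∀ {n : ℕ}, L.BoundedFormula α n → Prop
  | equal {n} (t₁ t₂ : L.Term (α ⊕ Fin n)) : IsPosEx (t₁.bdEqual t₂)
  | rel {n ℓ} (R : L.Relations ℓ) (ts : Fin ℓ → L.Term (α ⊕ Fin n)) :
      IsPosEx (R.boundedFormula ts)
  | sup {n} {φ ψ : L.BoundedFormula α n} : IsPosEx φ → IsPosEx ψ → IsPosEx (φ ⊔ ψ)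
  | inf {n} {φ ψ : L.BoundedFormula α n} : IsPosEx φ → IsPosEx ψ → IsPosEx (φ ⊓ ψ)
  | ex {n} {φ : L.BoundedFormula α (n + 1)} : IsPosEx φ → IsPosEx φ.ex

/-- A subset of `M^k` is positive-existentially definable (without parameters) in
the `L`-structure `str`. -/
def PosExDefinable {L : Language} {M : Type*} (str : L.Structure M) {k : ℕ}
    (A : Set (Fin k → M)) : Prop :=
  ∃ φ : L.Formula (Fin k), IsPosEx φ ∧
    ∀ x : Fin k → M, x ∈ A ↔ @Formula.Realize L M str (Fin k) φ x

section HolomorphyRings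

variable {R : Type*} [CommRing R] [IsDedekindDomain R]
variable {K : Type*} [Field K] [Algebra R K] [IsFractionRing R K]

/-- The subring of elements of `K` that are integral at every prime satisfying `P`. -/
def integralAt (P : HeightOneSpectrum R → Prop) : Subring K where
  carrier := {x : K | ∀ v : HeightOneSpectrum R, P v → v.valuation K x ≤ 1}
  zero_mem' := fun v _ => by simp only [Valuation.map_zero]; exact zero_le_one
  one_mem' := fun v _ => le_of_eq (Valuation.map_one _)
  add_mem' := fun {x y} hx hy v hv =>
    le_trans (Valuation.map_add _ x y) (max_le (hx v hv) (hy v hv))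
  mul_mem' := fun {x y} hx hy v hv => by
    rw [Valuation.map_mul]; exact mul_le_one' (hx v hv) (hy v hv)
  neg_mem' := fun {x} hx v hv => by rw [Valuation.map_neg]; exact hx v hv

theorem mem_integralAt {P : HeightOneSpectrum R → Prop} {x : K} :
    x ∈ (integralAt P : Subring K) ↔
      ∀ v : HeightOneSpectrum R, P v → v.valuation K x ≤ 1 :=
  Iff.rfl

theorem algebraMap_mem_integralAt (P : HeightOneSpectrum R → Prop) (r : R) :
    algebraMap R K r ∈ (integralAt P : Subring K) :=
  fun v _ => v.valuation_le_one (K := K) r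

/-- The normalized additive `v`-adic valuation of an element of `K`, as an integer
(with junk value `0` at `x = 0`). -/
noncomputable def ordAt (v : HeightOneSpectrum R) (x : K) : ℤ :=
  if h : v.valuation K x = 0 then 0 else - Multiplicative.toAdd (WithZero.unzero h)

end HolomorphyRings

/-- Relation symbols of the language `L̄`: inequality `≠`, strict divisibility `‖`,
and the order-comparison predicates `o_1, …, o_n`. -/
inductive BarRel (n : ℕ) : ℕ → Type
  | ne : BarRel n 2
  | pardvd : BarRel n 2
  | o : Fin n → BarRel n 2

/-- The language `L̄` obtained from `L_div` by removing `|` and adding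
`≠`, `‖`, `o_1, …, o_n`. -/
def LbarDiv (n : ℕ) : Language := ⟨DivFunc, BarRel n⟩

/-- The language `L̄` obtained from `L_{div,t}` by removing `|` and adding
`≠`, `‖`, `o_1, …, o_n`. -/
def LbarDivT (n : ℕ) : Language := ⟨DivTFunc, BarRel n⟩

section BarStructures

variable {D : Type*} [CommRing D] [IsDedekindDomain D]
variable {K : Type*} [Field K] [Algebra D K] [IsFractionRing D K]

/-- The `L̄`-structure (for `L = L_div`) on a subring `M` of `K`:
`x ≠ y` is inequality, `x ‖ y` iff `x ∣ y ∧ y ≠ 0`, and `o_i(x,y)` iff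
`x ≠ 0` and `ord_{𝔭_i}(x) > ord_{𝔭_i}(y)`. -/
def barDivStructure (M : Subring K) {n : ℕ} (𝔭 : Fin n → HeightOneSpectrum D) :
    (LbarDiv n).Structure M where
  funMap {_} f := match f with
    | .zero => fun _ => 0
    | .one => fun _ => 1
    | .add => fun v => v 0 + v 1
  RelMap {_} r := match r with
    | .ne => fun v => v 0 ≠ v 1
    | .pardvd => fun v => v 0 ∣ v 1 ∧ v 1 ≠ 0
    | .o i => fun v => v 0 ≠ 0 ∧
        (𝔭 i).valuation K ((v 0 : M) : K) < (𝔭 i).valuation K ((v 1 : M) : K)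

/-- The `L̄`-structure (for `L = L_{div,t}`) on a subring `M` of `K`, with `·t`
interpreted as multiplication by `τ`. -/
def barDivTStructure (M : Subring K) (τ : M) {n : ℕ}
    (𝔭 : Fin n → HeightOneSpectrum D) : (LbarDivT n).Structure M where
  funMap {_} f := match f with
    | .zero => fun _ => 0
    | .one => fun _ => 1
    | .mulT => fun v => τ * v 0
    | .add => fun v => v 0 + v 1
  RelMap {_} r := match r with
    | .ne => fun v => v 0 ≠ v 1
    | .pardvd => fun v => v 0 ∣ v 1 ∧ v 1 ≠ 0
    | .o i => fun v => v 0 ≠ 0 ∧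
        (𝔭 i).valuation K ((v 0 : M) : K) < (𝔭 i).valuation K ((v 1 : M) : K)

end BarStructures

section FunctionFieldSetting

variable (p : ℕ) [Fact p.Prime]
variable (K : Type*) [Field K] [Algebra (RatFunc (ZMod p)) K]
  [Algebra (Polynomial (ZMod p)) K]
  [IsScalarTower (Polynomial (ZMod p)) (RatFunc (ZMod p)) K]
  [FunctionField (ZMod p) K]
  [Algebra.IsSeparable (RatFunc (ZMod p)) K]

/-- The ring of integers of the function field `K`: the integral closure of
`𝔽_p[t]` in `K`. -/
noncomputable abbrev OK := FunctionField.ringOfIntegers (ZMod p) K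

/-- The image in `O_K` of a polynomial over `𝔽_p`. -/
noncomputable def polyToOK (f : Polynomial (ZMod p)) : OK p K :=
  ⟨algebraMap (Polynomial (ZMod p)) K f, isIntegral_algebraMap⟩

/-- The holomorphy ring `O_{K,S}` when `S` consists of all the infinite places
together with the finite set `Sf` of finite places: the elements of `K` integral
at every finite place outside `Sf`. -/
noncomputable abbrev holoFin (Sf : Finset (HeightOneSpectrum (OK p K))) : Subring K :=
  integralAt (fun v => v ∉ Sf)

/-- The holomorphy ring `O_{K,S}` when `S` is the complement of the finite set `T`
of finite places: the elements of `K` integral at each prime of `T`. -/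
noncomputable abbrev holoCof (T : Finset (HeightOneSpectrum (OK p K))) : Subring K :=
  integralAt (fun v => v ∈ T)

theorem polyMem_holoFin (Sf : Finset (HeightOneSpectrum (OK p K)))
    (f : Polynomial (ZMod p)) :
    algebraMap (Polynomial (ZMod p)) K f ∈ holoFin p K Sf :=
  algebraMap_mem_integralAt _ (polyToOK p K f)

/-- The image of `t` in `K`. -/
noncomputable def tK : K := algebraMap (RatFunc (ZMod p)) K RatFunc.X

theorem tK_eqPoly : tK p K = algebraMap (Polynomial (ZMod p)) K Polynomial.X := by
  rw [IsScalarTower.algebraMap_apply (Polynomial (ZMod p)) (RatFunc (ZMod p)) K,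
    RatFunc.algebraMap_X]
  rfl

theorem tK_mem (Pr : HeightOneSpectrum (OK p K) → Prop) :
    tK p K ∈ (integralAt Pr : Subring K) := by
  rw [tK_eqPoly]
  exact algebraMap_mem_integralAt _ (polyToOK p K Polynomial.X)

end FunctionFieldSetting


section Generic

variable {F : ℕ → Type} {n : ℕ}

/-- Translate terms between two languages with the same function symbols. -/
def trTerm {γ : Type*} : (⟨F, DivRel⟩ : Language).Term γ → (⟨F, BarRel n⟩ : Language).Term γ
  | .var i => .var i
  | .func f ts => .func f fun i => trTerm (ts i)

variable (z : F 0)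

/-- The zero term. -/
def zt {γ : Type*} : (⟨F, BarRel n⟩ : Language).Term γ := .func z Fin.elim0

variable {β : Type*}

/-- Positive/negative translation of quantifier-free formulas. -/
def trT : ∀ {k : ℕ}, Bool → (⟨F, DivRel⟩ : Language).BoundedFormula β k →
    (⟨F, BarRel n⟩ : Language).BoundedFormula β k
  | _, true, .falsum => Relations.boundedFormula BarRel.ne ![zt z, zt z]
  | _, false, .falsum => Term.bdEqual (zt z) (zt z)
  | _, true, .equal t₁ t₂ => Term.bdEqual (trTerm t₁) (trTerm t₂)
  | _, false, .equal t₁ t₂ => Relations.boundedFormula BarRel.ne ![trTerm t₁, trTerm t₂]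
  | _, true, .rel R ts => match R with
    | .dvd => Term.bdEqual (trTerm (ts 1)) (zt z) ⊔
        Relations.boundedFormula BarRel.pardvd (fun i => trTerm (ts i))
  | _, false, .rel R ts => match R with
    | .dvd => (List.finRange n).foldr
        (fun i acc => Relations.boundedFormula (BarRel.o i) (fun j => trTerm (ts j)) ⊔ acc)
        (Term.bdEqual (trTerm (ts 0)) (zt z) ⊓
          Relations.boundedFormula BarRel.ne ![trTerm (ts 1), zt z])
  | _, true, .imp φ ψ => trT false φ ⊔ trT true ψ
  | _, false, .imp φ ψ => trT true φ ⊓ trT false ψ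
  | _, _, .all _ => Relations.boundedFormula BarRel.ne ![zt z, zt z]

lemma isPosEx_foldr {L : Language} {α : Type*} {k : ℕ} {ι : Type*} (l : List ι)
    (f : ι → L.BoundedFormula α k) (b : L.BoundedFormula α k)
    (hf : ∀ i, IsPosEx (f i)) (hb : IsPosEx b) :
    IsPosEx (l.foldr (fun i acc => f i ⊔ acc) b) := by
  induction l with
  | nil => exact hb
  | cons i l ih => exact (hf i).sup ih

lemma isPosEx_trT {k : ℕ} {φ : (⟨F, DivRel⟩ : Language).BoundedFormula β k}
    (h : φ.IsQF) :
    ∀ b : Bool, IsPosEx (trT z b φ : (⟨F, BarRel n⟩ : Language).BoundedFormula β k) := by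
  induction h with
  | falsum =>
      intro b
      cases b <;> simp only [trT] <;> first | exact .equal _ _ | exact .rel _ _
  | of_isAtomic h =>
      cases h with
      | equal t₁ t₂ =>
          intro b
          cases b <;> simp only [trT, Term.bdEqual] <;>
            first | exact .equal _ _ | exact .rel _ _
      | rel R ts =>
          cases R
          intro b
          cases b <;> simp only [trT, Relations.boundedFormula]
          · exact isPosEx_foldr _ _ _ (fun i => .rel _ _) ((IsPosEx.equal _ _).inf (.rel _ _))
          · exact (IsPosEx.equal _ _).sup (.rel _ _)
  | imp h₁ h₂ ih₁ ih₂ =>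
      intro b
      cases b <;> simp only [trT]
      · exact (ih₁ true).inf (ih₂ false)
      · exact (ih₁ false).sup (ih₂ true)

lemma isPosEx_exs {L : Language} {α : Type*} {k : ℕ} {φ : L.BoundedFormula α k}
    (h : IsPosEx φ) : IsPosEx φ.exs := by
  induction k with
  | zero => exact h
  | succ k ih => exact ih h.ex

variable {M : Type*} [str : (⟨F, DivRel⟩ : Language).Structure M]
  [strBar : (⟨F, BarRel n⟩ : Language).Structure M]

lemma realize_trTerm
    (hfun : ∀ {k : ℕ} (f : F k) (v : Fin k → M), str.funMap f v = strBar.funMap f v)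
    {γ : Type*} (v : γ → M) :
    ∀ t : (⟨F, DivRel⟩ : Language).Term γ,
      Term.realize v (trTerm t : (⟨F, BarRel n⟩ : Language).Term γ) = Term.realize v t
  | .var i => rfl
  | .func f ts => by
      show strBar.funMap f _ = str.funMap f _
      rw [← hfun]
      exact congrArg _ (funext fun i => realize_trTerm hfun v (ts i))

lemma realize_zt {γ : Type*} (v : γ → M) :
    Term.realize v (zt z : (⟨F, BarRel n⟩ : Language).Term γ) = strBar.funMap z Fin.elim0 := by
  show strBar.funMap z _ = _
  exact congrArg _ (funext fun i => i.elim0)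

lemma realize_foldr_sup {L : Language} {α : Type*} {k : ℕ} [S : L.Structure M] {ι : Type*}
    (l : List ι) (f : ι → L.BoundedFormula α k) (b : L.BoundedFormula α k)
    (v : α → M) (xs : Fin k → M) :
    (l.foldr (fun i acc => f i ⊔ acc) b).Realize v xs ↔
      (∃ i ∈ l, (f i).Realize v xs) ∨ b.Realize v xs := by
  induction l with
  | nil => simp
  | cons i l ih =>
      simp only [List.foldr_cons, BoundedFormula.realize_sup, ih, List.mem_cons]
      aesop

variable
  (hfun : ∀ {k : ℕ} (f : F k) (v : Fin k → M), str.funMap f v = strBar.funMap f v)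
  (hne : ∀ v : Fin 2 → M, strBar.RelMap BarRel.ne v ↔ v 0 ≠ v 1)
  (hdvd : ∀ v : Fin 2 → M, str.RelMap DivRel.dvd v ↔
    v 1 = strBar.funMap z Fin.elim0 ∨ strBar.RelMap BarRel.pardvd v)
  (hndvd : ∀ v : Fin 2 → M, ¬ str.RelMap DivRel.dvd v ↔
    (v 0 = strBar.funMap z Fin.elim0 ∧ v 1 ≠ strBar.funMap z Fin.elim0) ∨
      ∃ i : Fin n, strBar.RelMap (BarRel.o i) v)

include hfun hne hdvd hndvd in
lemma realize_trT {k : ℕ} {φ : (⟨F, DivRel⟩ : Language).BoundedFormula β k}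
    (h : φ.IsQF) : ∀ (v : β → M) (xs : Fin k → M),
    ((trT z true φ : (⟨F, BarRel n⟩ : Language).BoundedFormula β k).Realize v xs ↔
      φ.Realize v xs) ∧
    ((trT z false φ : (⟨F, BarRel n⟩ : Language).BoundedFormula β k).Realize v xs ↔
      ¬ φ.Realize v xs) := by
  induction h with
  | falsum =>
      intro v xs
      constructor <;>
        simp only [trT, BoundedFormula.realize_rel, BoundedFormula.realize_bdEqual,
          hne, realize_zt (strBar := strBar) z] <;>
        simp [BoundedFormula.Realize, realize_zt (strBar := strBar) z]
  | of_isAtomic h =>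
      cases h with
      | equal t₁ t₂ =>
          intro v xs
          constructor <;>
            simp only [trT, Term.bdEqual, BoundedFormula.realize_rel,
              BoundedFormula.realize_bdEqual, hne] <;>
            simp [BoundedFormula.Realize,
              realize_trTerm (str := str) (strBar := strBar) hfun]
      | rel R ts =>
          cases R
          intro v xs
          have hts : ∀ j, Term.realize (Sum.elim v xs)
              (trTerm (ts j) : (⟨F, BarRel n⟩ : Language).Term _) =
              Term.realize (Sum.elim v xs) (ts j) :=
            fun j => realize_trTerm hfun _ _
          constructor
          · simp only [trT, Relations.boundedFormula, BoundedFormula.realize_sup, BoundedFormula.realize_bdEqual,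
              BoundedFormula.realize_rel, BoundedFormula.Realize, hts, realize_zt (strBar := strBar) z]
            exact (hdvd (fun i => Term.realize (Sum.elim v xs) (ts i))).symm
          · simp only [trT, Relations.boundedFormula]
            rw [realize_foldr_sup]
            simp only [BoundedFormula.realize_rel, BoundedFormula.Realize, BoundedFormula.realize_inf,
              BoundedFormula.realize_bdEqual, hts, realize_zt (strBar := strBar) z, hne,
              List.mem_finRange, true_and, Matrix.cons_val_zero, Matrix.cons_val_one,
              Matrix.head_cons]
            rw [hndvd (fun i => Term.realize (Sum.elim v xs) (ts i))]
            tauto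
  | imp h₁ h₂ ih₁ ih₂ =>
      intro v xs
      obtain ⟨p₁, n₁⟩ := ih₁ v xs
      obtain ⟨p₂, n₂⟩ := ih₂ v xs
      constructor <;>
        simp only [trT, BoundedFormula.realize_sup, BoundedFormula.realize_inf,
          BoundedFormula.realize_imp, p₁, n₁, p₂, n₂] <;>
        tauto

include hfun hne hdvd hndvd in
theorem generic_main (m : ℕ) (φ : (⟨F, DivRel⟩ : Language).Formula (Fin m))
    (hφ : IsExistentialFormula φ) :
    ∃ ψ : (⟨F, BarRel n⟩ : Language).Formula (Fin m), IsPosEx ψ ∧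
      ∀ c : Fin m → M, φ.Realize c ↔ ψ.Realize c := by
  obtain ⟨k, χ, hQF, rfl⟩ := hφ
  refine ⟨(trT z true χ : (⟨F, BarRel n⟩ : Language).BoundedFormula _ _).exs,
    isPosEx_exs (isPosEx_trT z hQF true), fun c => ?_⟩
  rw [BoundedFormula.realize_exs, BoundedFormula.realize_exs]
  exact exists_congr fun xs =>
    ((realize_trT z hfun hne hdvd hndvd hQF c xs).1).symm

end Generic

section RingLemma

variable {R : Type*} [CommRing R] [IsDedekindDomain R]
variable {K : Type*} [Field K] [Algebra R K] [IsFractionRing R K]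
variable {n : ℕ} (𝔭 : Fin n → HeightOneSpectrum R)

lemma ndvd_iff (x y : ↥(integralAt (fun v => ∃ i, 𝔭 i = v) : Subring K)) :
    ¬ (x ∣ y) ↔ ((x = 0 ∧ y ≠ 0) ∨
      ∃ i, x ≠ 0 ∧ (𝔭 i).valuation K (x : K) < (𝔭 i).valuation K (y : K)) := by
  constructor
  · intro h
    by_cases hx : x = 0
    · exact Or.inl ⟨hx, fun hy => h (hy ▸ dvd_zero x)⟩
    · right
      by_contra hc
      push_neg at hc
      have hxK : (x : K) ≠ 0 := fun h0 => hx (Subtype.ext h0)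
      have hz : (y : K) / (x : K) ∈ (integralAt (fun v => ∃ i, 𝔭 i = v) : Subring K) := by
        rintro v ⟨i, rfl⟩
        have hle : (𝔭 i).valuation K (y : K) ≤ (𝔭 i).valuation K (x : K) := hc i hx
        have hvx : (𝔭 i).valuation K (x : K) ≠ 0 :=
          (Valuation.ne_zero_iff _).mpr hxK
        rw [map_div₀]
        exact (div_le_one₀ (lt_of_le_of_ne (zero_le') (Ne.symm hvx))).mpr hle
      apply h
      refine ⟨⟨(y : K) / (x : K), hz⟩, Subtype.ext ?_⟩
      push_cast
      field_simp
  · rintro (⟨hx, hy⟩ | ⟨i, hx, hlt⟩) hdvd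
    · exact hy (by rw [hx, zero_dvd_iff] at hdvd; exact hdvd)
    · obtain ⟨c, rfl⟩ := hdvd
      have hcle : (𝔭 i).valuation K (c : K) ≤ 1 := c.2 (𝔭 i) ⟨i, rfl⟩
      have : (𝔭 i).valuation K ((x * c : _) : K) ≤ (𝔭 i).valuation K (x : K) := by
        push_cast
        rw [map_mul]
        calc (𝔭 i).valuation K (x : K) * (𝔭 i).valuation K (c : K)
            ≤ (𝔭 i).valuation K (x : K) * 1 := mul_le_mul_right hcle _
          _ = _ := mul_one _
      exact absurd hlt (not_lt_of_ge this)

end RingLemma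


/-- **Proposition.** Let `R = ℤ` (resp. `𝔽_p[t]`), `K` a finite separable extension
of its fraction field, `T = {𝔭_1, …, 𝔭_n}` a finite set of primes of `O_K`, and
`O_{K,S}` the holomorphy ring at the complement of `T`. For every existential
formula `φ` of `L = L_div` (resp. `L_{div,t}`), there is a positive-existential
formula `φ̄` of the language `L̄` (with `|` replaced by `≠`, `‖`, `o_1, …, o_n`)
which is equivalent to `φ` over `O_{K,S}`. -/
theorem existential_iff_posEx_bar :
    (∀ (K : Type) [Field K] [NumberField K] (n : ℕ)
        (𝔭 : Fin n → HeightOneSpectrum (NumberField.RingOfIntegers K)),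
        Function.Injective 𝔭 →
        ∀ (m : ℕ) (φ : Ldiv.Formula (Fin m)), IsExistentialFormula φ →
          ∃ ψ : (LbarDiv n).Formula (Fin m), IsPosEx ψ ∧
            ∀ c : Fin m → ↥(integralAt (fun v => ∃ i, 𝔭 i = v) : Subring K),
              @Formula.Realize Ldiv ↥(integralAt (fun v => ∃ i, 𝔭 i = v) : Subring K)
                  (divStructure _) (Fin m) φ c ↔
              @Formula.Realize (LbarDiv n)
                  ↥(integralAt (fun v => ∃ i, 𝔭 i = v) : Subring K)
                  (barDivStructure (integralAt (fun v => ∃ i, 𝔭 i = v)) 𝔭)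
                  (Fin m) ψ c) ∧
    (∀ (p : ℕ) [Fact p.Prime] (K : Type) [Field K]
        [Algebra (RatFunc (ZMod p)) K] [Algebra (Polynomial (ZMod p)) K]
        [IsScalarTower (Polynomial (ZMod p)) (RatFunc (ZMod p)) K]
        [FunctionField (ZMod p) K] [Algebra.IsSeparable (RatFunc (ZMod p)) K]
        (n : ℕ) (𝔭 : Fin n → HeightOneSpectrum (OK p K)),
        Function.Injective 𝔭 →
        ∀ (m : ℕ) (φ : LdivT.Formula (Fin m)), IsExistentialFormula φ →
          ∃ ψ : (LbarDivT n).Formula (Fin m), IsPosEx ψ ∧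
            ∀ c : Fin m → ↥(integralAt (fun v => ∃ i, 𝔭 i = v) : Subring K),
              @Formula.Realize LdivT ↥(integralAt (fun v => ∃ i, 𝔭 i = v) : Subring K)
                  (divTStructure _ ⟨tK p K, tK_mem p K _⟩) (Fin m) φ c ↔
              @Formula.Realize (LbarDivT n)
                  ↥(integralAt (fun v => ∃ i, 𝔭 i = v) : Subring K)
                  (barDivTStructure (integralAt (fun v => ∃ i, 𝔭 i = v))
                    ⟨tK p K, tK_mem p K _⟩ 𝔭)
                  (Fin m) ψ c) := by
  constructor
  · intro K _ _ n 𝔭 _ m φ hφ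
    exact generic_main (str := divStructure _) (strBar := barDivStructure _ 𝔭)
      DivFunc.zero
      (fun {k} f v => by cases f <;> rfl)
      (fun v => Iff.rfl)
      (fun v => by
        show (v 0 ∣ v 1) ↔ v 1 = 0 ∨ (v 0 ∣ v 1 ∧ v 1 ≠ 0)
        rcases eq_or_ne (v 1) 0 with h | h <;> simp [h])
      (fun v => by
        show ¬ (v 0 ∣ v 1) ↔ _
        exact ndvd_iff 𝔭 (v 0) (v 1))
      m φ hφ
  · intro p _ K _ _ _ _ _ _ n 𝔭 _ m φ hφ
    exact generic_main (str := divTStructure _ ⟨tK p K, tK_mem p K _⟩)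
      (strBar := barDivTStructure _ ⟨tK p K, tK_mem p K _⟩ 𝔭)
      DivTFunc.zero
      (fun {k} f v => by cases f <;> rfl)
      (fun v => Iff.rfl)
      (fun v => by
        show (v 0 ∣ v 1) ↔ v 1 = 0 ∨ (v 0 ∣ v 1 ∧ v 1 ≠ 0)
        rcases eq_or_ne (v 1) 0 with h | h <;> simp [h])
      (fun v => by
        show ¬ (v 0 ∣ v 1) ↔ _
        exact ndvd_iff 𝔭 (v 0) (v 1))
      m φ hφ


end Paper
end

section
/- Let p be an odd rational prime, K a finite separable extension of F = 𝔽_p(t), O_K the integral closure of 𝔽_p[t] in K, S a finite set of places of K containing all the infinite places, and let q ∈ 𝔽_p[t] be irreducible and b ∈ 𝔽_p[t] non-zero of degree less than deg(q) be such that qx + b is never a unit of O_{K,S} for x ∈ O_{K,S}. Then for every y ∈ O_{K,S}: y ≠ 0 if and only if there exist r, s, x ∈ O_{K,S} such that r·y + s·(q·x + b) = 1. -/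
open FirstOrder Language IsDedekindDomain Polynomial

set_option linter.unusedSectionVars false

namespace Paper

section FunctionFieldSetting

variable (p : ℕ) [Fact p.Prime]
variable (K : Type*) [Field K] [Algebra (RatFunc (ZMod p)) K]
  [Algebra (Polynomial (ZMod p)) K]
  [IsScalarTower (Polynomial (ZMod p)) (RatFunc (ZMod p)) K]
  [FunctionField (ZMod p) K]
  [Algebra.IsSeparable (RatFunc (ZMod p)) K]

section Aux
open scoped Multiplicative


variable {R : Type*} [CommRing R] [IsDedekindDomain R]
variable {K : Type*} [Field K] [Algebra R K] [IsFractionRing R K]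

lemma auxExistsNatLeVal {γ : WithZero (Multiplicative ℤ)} (hγ : γ ≠ 0) :
    ∃ k : ℕ, (↑(Multiplicative.ofAdd (-(k : ℤ))) : WithZero (Multiplicative ℤ)) ≤ γ := by
  obtain ⟨γ, rfl⟩ := WithZero.ne_zero_iff_exists.mp hγ
  refine ⟨(-Multiplicative.toAdd γ).toNat, ?_⟩
  rw [WithZero.coe_le_coe, ← Multiplicative.toAdd_le]
  simp only [toAdd_ofAdd]
  omega

lemma auxFiniteValLtOne {y : K} (hy : y ≠ 0) :
    {v : HeightOneSpectrum R | v.valuation K y < 1}.Finite := by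
  obtain ⟨⟨n, ⟨d, hd⟩⟩, hk⟩ := IsLocalization.surj (nonZeroDivisors R) y
  simp only at hk
  have hn : n ≠ 0 := by
    rintro rfl
    rw [map_zero] at hk
    have hd0 : (algebraMap R K) d ≠ 0 :=
      IsFractionRing.to_map_ne_zero_of_mem_nonZeroDivisors hd
    exact hy ((mul_eq_zero.mp hk).resolve_right hd0)
  have hfin : {v : HeightOneSpectrum R | v.asIdeal ∣ Ideal.span {n}}.Finite :=
    Ideal.finite_factors (by simpa [Ideal.span_singleton_eq_bot] using hn)
  refine hfin.subset fun v hv => ?_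
  have h1 : v.valuation K (algebraMap R K n) < 1 := by
    rw [← hk, Valuation.map_mul]
    calc v.valuation K y * v.valuation K (algebraMap R K d)
        ≤ v.valuation K y * 1 := mul_le_mul_right (v.valuation_le_one (K := K) d) _
      _ < 1 := by rwa [mul_one]
  rw [HeightOneSpectrum.valuation_of_algebraMap] at h1
  exact (HeightOneSpectrum.intValuation_lt_one_iff_dvd v n).mp h1

/-- Key generic bezout construction. -/
theorem auxExistsBezout {y : K} (hy : y ≠ 0) {q b : R} (hqb : IsCoprime q b) :
    ∃ (s x : R) (r : K),
      (∀ v : HeightOneSpectrum R, v.valuation K r ≤ 1) ∧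
      r * y + algebraMap R K s *
        (algebraMap R K q * algebraMap R K x + algebraMap R K b) = 1 := by
  classical
  set T : Finset (HeightOneSpectrum R) := (auxFiniteValLtOne (R := R) hy).toFinset with hT
  have hTmem : ∀ v : HeightOneSpectrum R, v ∈ T ↔ v.valuation K y < 1 := by
    intro v; rw [hT, Set.Finite.mem_toFinset]; rfl
  set T1 : Finset (HeightOneSpectrum R) := T.filter (fun v => q ∉ v.asIdeal) with hT1
  -- Step A : find x with q*x + b ≡ 1 mod v for v ∈ T1
  have hqJ : Ideal.span {q} ⊔ (∏ v ∈ T1, v.asIdeal) = ⊤ := by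
    by_contra h
    obtain ⟨m, hm, hle⟩ := Ideal.exists_le_maximal _ h
    have hprod : (∏ v ∈ T1, v.asIdeal) ≤ m := le_trans le_sup_right hle
    obtain ⟨v, hv, hvm⟩ := (hm.isPrime.prod_le).mp hprod
    have : v.asIdeal = m := (v.isMaximal.eq_of_le hm.ne_top hvm)
    have hq : q ∈ v.asIdeal := by
      rw [this]
      exact hle (Submodule.mem_sup_left (Ideal.mem_span_singleton_self q))
    exact (Finset.mem_filter.mp hv).2 hq
  have h1b : (1 - b) ∈ Ideal.span {q} ⊔ (∏ v ∈ T1, v.asIdeal) := hqJ ▸ Submodule.mem_top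
  obtain ⟨u, hu, c0, hc0, huc⟩ := Submodule.mem_sup.mp h1b
  obtain ⟨x, hx⟩ := Ideal.mem_span_singleton'.mp hu
  set z : R := q * x + b with hz
  have hzc0 : z = 1 - c0 := by rw [hz, mul_comm q x, hx]; linear_combination huc
  -- z avoids all primes in T
  have hznot : ∀ v ∈ T, z ∉ v.asIdeal := by
    intro v hv hzv
    by_cases hqv : q ∈ v.asIdeal
    · have hbv : b ∈ v.asIdeal := by
        have : z - q * x ∈ v.asIdeal :=
          Ideal.sub_mem _ hzv (Ideal.mul_mem_right _ _ hqv)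
        simpa [hz] using this
      obtain ⟨a, c, hac⟩ := hqb
      have h1 : (1 : R) ∈ v.asIdeal := by
        rw [← hac]
        exact Ideal.add_mem _ (Ideal.mul_mem_left _ _ hqv) (Ideal.mul_mem_left _ _ hbv)
      exact v.isMaximal.ne_top (Ideal.eq_top_of_isUnit_mem _ h1 isUnit_one)
    · have hvT1 : v ∈ T1 := Finset.mem_filter.mpr ⟨hv, hqv⟩
      have hc0v : c0 ∈ v.asIdeal :=
        (le_trans Ideal.prod_le_inf (Finset.inf_le hvT1)) hc0
      have h1 : (1 : R) ∈ v.asIdeal := by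
        have := Ideal.add_mem _ hzv hc0v
        rwa [hzc0, sub_add_cancel] at this
      exact v.isMaximal.ne_top (Ideal.eq_top_of_isUnit_mem _ h1 isUnit_one)
  -- exponents
  have hval_ne : ∀ v : HeightOneSpectrum R, v.valuation K y ≠ 0 :=
    fun v => (Valuation.ne_zero_iff _).mpr hy
  choose k hk using fun v : HeightOneSpectrum R => auxExistsNatLeVal (hval_ne v)
  -- Step B : s with s*z ≡ 1 mod ∏ v^(k v)
  have hzI : Ideal.span {z} ⊔ (∏ v ∈ T, v.asIdeal ^ (k v)) = ⊤ := by
    by_contra h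
    obtain ⟨m, hm, hle⟩ := Ideal.exists_le_maximal _ h
    have hprod : (∏ v ∈ T, v.asIdeal ^ (k v)) ≤ m := le_trans le_sup_right hle
    obtain ⟨v, hv, hvm⟩ := (hm.isPrime.prod_le).mp hprod
    have hvm' : v.asIdeal ≤ m := hm.isPrime.le_of_pow_le hvm
    have heq : v.asIdeal = m := (v.isMaximal.eq_of_le hm.ne_top hvm')
    exact hznot v hv (heq ▸ hle (Submodule.mem_sup_left (Ideal.mem_span_singleton_self z)))
  have h1' : (1 : R) ∈ Ideal.span {z} ⊔ (∏ v ∈ T, v.asIdeal ^ (k v)) :=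
    hzI ▸ Submodule.mem_top
  obtain ⟨u', hu', c, hc, huc'⟩ := Submodule.mem_sup.mp h1'
  obtain ⟨s, hs⟩ := Ideal.mem_span_singleton'.mp hu'
  -- the element r
  refine ⟨s, x, algebraMap R K c / y, ?_, ?_⟩
  · intro v
    have hcy : v.valuation K (algebraMap R K c) ≤ v.valuation K y := by
      by_cases hv : v ∈ T
      · have hcv : c ∈ v.asIdeal ^ (k v) :=
          (le_trans Ideal.prod_le_inf (Finset.inf_le hv)) hc
        have hdvd : v.asIdeal ^ (k v) ∣ Ideal.span {c} :=
          Ideal.dvd_iff_le.mpr ((Ideal.span_singleton_le_iff_mem _).mpr hcv)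
        have := (HeightOneSpectrum.intValuation_le_pow_iff_dvd v c (k v)).mpr hdvd
        rw [HeightOneSpectrum.valuation_of_algebraMap]
        exact le_trans this (hk v)
      · have : ¬ v.valuation K y < 1 := fun hlt => hv ((hTmem v).mpr hlt)
        push_neg at this
        calc v.valuation K (algebraMap R K c) ≤ 1 := v.valuation_le_one c
          _ ≤ v.valuation K y := this
    rw [map_div₀]
    exact (div_le_one₀ (lt_of_le_of_ne (zero_le') (Ne.symm (hval_ne v)))).mpr hcy
  · have h1 : c + s * (q * x + b) = 1 := by rw [← hz, hs]; linear_combination huc'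
    have h2 := congrArg (algebraMap R K) h1
    rw [map_add, map_mul, map_add, map_mul, map_one] at h2
    rw [div_mul_cancel₀ _ hy]
    linear_combination h2

end Aux

/-- **Lemma.** With `q, b` as in Lenstra's lemma (so that `qx + b` is never a unit
of `O_{K,S}`), an element `y ∈ O_{K,S}` is nonzero if and only if there exist
`r, s, x ∈ O_{K,S}` with `r·y + s·(q·x + b) = 1`. -/
theorem ne_zero_iff_bezout (hp2 : p ≠ 2)
    (Sf : Finset (HeightOneSpectrum (OK p K)))
    (q b : Polynomial (ZMod p)) (hq : Irreducible q) (hb : b ≠ 0)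
    (hdeg : b.degree < q.degree)
    (hnever : ∀ x : holoFin p K Sf,
      ¬ IsUnit ((⟨algebraMap (Polynomial (ZMod p)) K q, polyMem_holoFin p K Sf q⟩ :
            holoFin p K Sf) * x +
          (⟨algebraMap (Polynomial (ZMod p)) K b, polyMem_holoFin p K Sf b⟩ :
            holoFin p K Sf))) :
    ∀ y : holoFin p K Sf, y ≠ 0 ↔
      ∃ r s x : holoFin p K Sf,
        r * y + s * ((⟨algebraMap (Polynomial (ZMod p)) K q, polyMem_holoFin p K Sf q⟩ :
            holoFin p K Sf) * x +
          (⟨algebraMap (Polynomial (ZMod p)) K b, polyMem_holoFin p K Sf b⟩ :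
            holoFin p K Sf)) = 1 := by
  intro y
  constructor
  · intro hy0
    have hndvd : ¬ q ∣ b := fun hdvd =>
      absurd (Polynomial.degree_le_of_dvd hdvd hb) (not_le.mpr hdeg)
    have hco : IsCoprime q b := (hq.coprime_iff_not_dvd).mpr hndvd
    have hco' : IsCoprime (algebraMap (Polynomial (ZMod p)) (OK p K) q)
        (algebraMap (Polynomial (ZMod p)) (OK p K) b) :=
      hco.map (algebraMap (Polynomial (ZMod p)) (OK p K))
    have hyK : (y : K) ≠ 0 := fun h => hy0 (Subtype.ext h)
    obtain ⟨s, x, r, hr, heq⟩ := auxExistsBezout (R := OK p K) (K := K) hyK hco'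
    refine ⟨⟨r, fun v _ => hr v⟩,
      ⟨algebraMap (OK p K) K s, algebraMap_mem_integralAt _ s⟩,
      ⟨algebraMap (OK p K) K x, algebraMap_mem_integralAt _ x⟩, ?_⟩
    apply Subtype.ext
    have hqK : algebraMap (Polynomial (ZMod p)) K q =
        algebraMap (OK p K) K (algebraMap (Polynomial (ZMod p)) (OK p K) q) :=
      IsScalarTower.algebraMap_apply _ _ _ q
    have hbK : algebraMap (Polynomial (ZMod p)) K b =
        algebraMap (OK p K) K (algebraMap (Polynomial (ZMod p)) (OK p K) b) :=
      IsScalarTower.algebraMap_apply _ _ _ b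
    show r * (y : K) + algebraMap (OK p K) K s *
        (algebraMap (Polynomial (ZMod p)) K q * algebraMap (OK p K) K x +
          algebraMap (Polynomial (ZMod p)) K b) = 1
    rw [hqK, hbK]
    exact heq
  · rintro ⟨r, s, x, h⟩ hy0
    rw [hy0, mul_zero, zero_add] at h
    exact hnever x (IsUnit.of_mul_eq_one s (by rw [mul_comm]; exact h))

end FunctionFieldSetting


end Paper
end

section
/- With the notation below, let a, b ∈ K^× with ord_{∞_i}(b) ≤ C₁ for every i = 1, …, s_∞, and let q_1, …, q_{2s_∞+1} ∈ 𝔽_p[t] be irreducible polynomials with pairwise distinct degrees satisfying ord_∞(q_j − q_ℓ) < −2C₁ for all j ≠ ℓ. Then there exists an index j₀ such that for every i = 1, …, s_∞: ord_{∞_i}(a) ≠ ord_{∞_i}(b·q_{j₀}) and ord_{∞_i}(a + b·q_{j₀}) ≤ 0. -/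
open FirstOrder Language IsDedekindDomain Polynomial

set_option linter.unusedSectionVars false

namespace Paper

section FunctionFieldSetting

variable (p : ℕ) [Fact p.Prime]
variable (K : Type*) [Field K] [Algebra (RatFunc (ZMod p)) K]
  [Algebra (Polynomial (ZMod p)) K]
  [IsScalarTower (Polynomial (ZMod p)) (RatFunc (ZMod p)) K]
  [FunctionField (ZMod p) K]
  [Algebra.IsSeparable (RatFunc (ZMod p)) K]

/-- The valuation subring at infinity of `𝔽_p(t)` (consisting of the rational
functions of degree at most `0`). -/
noncomputable def inftyVSR : ValuationSubring (RatFunc (ZMod p)) :=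
  letI := Classical.decEq (RatFunc (ZMod p))
  (FunctionField.inftyValuation (ZMod p)).valuationSubring

/-- The infinite places of `K`: the valuation subrings of `K` lying above the
place at infinity of `𝔽_p(t)`. -/
noncomputable def InfPlace : Type _ :=
  {V : ValuationSubring K // V.comap (algebraMap (RatFunc (ZMod p)) K) = inftyVSR p}

/-- The number of infinite places of `K`. -/
noncomputable def numInfPlaces : ℕ := Nat.card (InfPlace p K)

/-- The infinite places of `K` together with their normalized (surjective,
`ℤ`-valued) additive valuations: `W` enumerates, without repetition, all the
valuation subrings of `K` lying above the place at infinity of `𝔽_p(t)`, and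
`ord i` is the corresponding normalized additive valuation. -/
structure InfData where
  /-- the number `s_∞` of infinite places -/
  s : ℕ
  pos : 0 < s
  /-- the valuation subrings at the infinite places -/
  W : Fin s → ValuationSubring K
  inj : Function.Injective W
  above : ∀ i, (W i).comap (algebraMap (RatFunc (ZMod p)) K) = inftyVSR p
  complete : ∀ V : ValuationSubring K,
    V.comap (algebraMap (RatFunc (ZMod p)) K) = inftyVSR p → ∃ i, V = W i
  /-- the normalized additive valuations `ord_{∞_i}` -/
  ord : Fin s → K → ℤ
  ord_mul : ∀ i (x y : K), x ≠ 0 → y ≠ 0 → ord i (x * y) = ord i x + ord i y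
  ord_add : ∀ i (x y : K), x ≠ 0 → y ≠ 0 → x + y ≠ 0 →
    min (ord i x) (ord i y) ≤ ord i (x + y)
  ord_surj : ∀ i (n : ℤ), ∃ x : K, x ≠ 0 ∧ ord i x = n
  mem_iff : ∀ i (x : K), x ≠ 0 → (x ∈ W i ↔ 0 ≤ ord i x)

/-- `ord_min(x) = min {ord_{∞_i}(x) : i = 1, …, s_∞}`. -/
noncomputable def ordMin (I : InfData p K) (x : K) : ℤ :=
  haveI : Nonempty (Fin I.s) := Fin.pos_iff_nonempty.mp I.pos
  Finset.univ.inf' Finset.univ_nonempty (fun i => I.ord i x)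


/- ### Auxiliary lemmas about `InfData` -/

theorem aux_ord_one (I : InfData p K) (i : Fin I.s) : I.ord i 1 = 0 := by
  have h := I.ord_mul i 1 1 one_ne_zero one_ne_zero
  rw [mul_one] at h; omega

theorem aux_ord_inv (I : InfData p K) (i : Fin I.s) {x : K} (hx : x ≠ 0) :
    I.ord i x⁻¹ = - I.ord i x := by
  have h := I.ord_mul i x x⁻¹ hx (inv_ne_zero hx)
  rw [mul_inv_cancel₀ hx, aux_ord_one] at h; omega

theorem aux_ord_neg (I : InfData p K) (i : Fin I.s) {x : K} (hx : x ≠ 0) :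
    I.ord i (-x) = I.ord i x := by
  have h1 : I.ord i (-1 : K) = 0 := by
    have h := I.ord_mul i (-1) (-1) (by norm_num) (by norm_num)
    rw [neg_mul_neg, one_mul, aux_ord_one] at h; omega
  have h := I.ord_mul i (-1) x (by norm_num) hx
  rw [neg_one_mul] at h; omega

theorem aux_ord_pow (I : InfData p K) (i : Fin I.s) {x : K} (hx : x ≠ 0) (n : ℕ) :
    I.ord i (x ^ n) = n * I.ord i x := by
  induction n with
  | zero => simpa using aux_ord_one p K I i
  | succ m ih =>
      rw [pow_succ, I.ord_mul i _ x (pow_ne_zero m hx) hx, ih]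
      push_cast; ring

theorem aux_mem_W_iff (I : InfData p K) (i : Fin I.s) {y : RatFunc (ZMod p)}
    (hy : y ≠ 0) :
    algebraMap (RatFunc (ZMod p)) K y ∈ I.W i ↔ y.intDegree ≤ 0 := by
  have h1 : algebraMap (RatFunc (ZMod p)) K y ∈ I.W i ↔ y ∈ inftyVSR p := by
    rw [← I.above i]; exact Iff.rfl
  rw [h1]
  have h2 : y ∈ inftyVSR p ↔
      (letI := Classical.decEq (RatFunc (ZMod p));
        FunctionField.inftyValuation (ZMod p) y ≤ 1) := Iff.rfl
  rw [h2]
  letI := Classical.decEq (RatFunc (ZMod p))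
  show RatFunc.inftyValuation (ZMod p) y ≤ 1 ↔ _
  rw [RatFunc.inftyValuation_apply, RatFunc.inftyValuation_of_nonzero _ hy,
    ← WithZero.exp_zero, WithZero.exp_le_exp]

theorem aux_intDegree_inv {y : RatFunc (ZMod p)} (hy : y ≠ 0) :
    y⁻¹.intDegree = - y.intDegree := by
  have h := RatFunc.intDegree_mul hy (inv_ne_zero hy)
  rw [mul_inv_cancel₀ hy, RatFunc.intDegree_one] at h; omega

theorem aux_ord_of_intDegree_zero (I : InfData p K) (i : Fin I.s)
    {y : RatFunc (ZMod p)} (hy : y ≠ 0) (hd : y.intDegree = 0) :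
    I.ord i (algebraMap (RatFunc (ZMod p)) K y) = 0 := by
  have hyK : algebraMap (RatFunc (ZMod p)) K y ≠ 0 := by
    simpa using hy
  have h1 : 0 ≤ I.ord i (algebraMap (RatFunc (ZMod p)) K y) := by
    rw [← I.mem_iff i _ hyK]
    exact (aux_mem_W_iff p K I i hy).mpr hd.le
  have hyK' : algebraMap (RatFunc (ZMod p)) K y⁻¹ ≠ 0 := by
    simpa using inv_ne_zero hy
  have h2 : 0 ≤ I.ord i (algebraMap (RatFunc (ZMod p)) K y⁻¹) := by
    rw [← I.mem_iff i _ hyK']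
    exact (aux_mem_W_iff p K I i (inv_ne_zero hy)).mpr
      (by rw [aux_intDegree_inv p hy, hd]; norm_num)
  rw [map_inv₀, aux_ord_inv p K I i hyK] at h2
  omega

theorem aux_tK_ne_zero : tK p K ≠ 0 := by
  unfold tK
  simpa using RatFunc.X_ne_zero (K := ZMod p)

theorem aux_ord_tK (I : InfData p K) (i : Fin I.s) : I.ord i (tK p K) ≤ -1 := by
  by_contra h
  push_neg at h
  have hmem : tK p K ∈ I.W i := by
    rw [I.mem_iff i _ (aux_tK_ne_zero p K)]; omega
  have : (RatFunc.X : RatFunc (ZMod p)).intDegree ≤ 0 :=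
    (aux_mem_W_iff p K I i RatFunc.X_ne_zero).mp hmem
  rw [RatFunc.intDegree_X] at this
  omega

theorem aux_algK_ne_zero {f : Polynomial (ZMod p)} (hf : f ≠ 0) :
    algebraMap (Polynomial (ZMod p)) K f ≠ 0 := by
  rw [IsScalarTower.algebraMap_apply (Polynomial (ZMod p)) (RatFunc (ZMod p)) K]
  simpa using RatFunc.algebraMap_ne_zero hf

theorem aux_intDegree_X_pow (n : ℕ) :
    ((RatFunc.X : RatFunc (ZMod p)) ^ n).intDegree = n := by
  induction n with
  | zero => simpa using RatFunc.intDegree_one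
  | succ m ih =>
      rw [pow_succ, RatFunc.intDegree_mul (pow_ne_zero m RatFunc.X_ne_zero)
        RatFunc.X_ne_zero, ih, RatFunc.intDegree_X]
      push_cast; ring

theorem aux_ord_algK (I : InfData p K) (i : Fin I.s) {f : Polynomial (ZMod p)}
    (hf : f ≠ 0) :
    I.ord i (algebraMap (Polynomial (ZMod p)) K f) =
      (f.natDegree : ℤ) * I.ord i (tK p K) := by
  set n := f.natDegree with hn
  set fR : RatFunc (ZMod p) := algebraMap (Polynomial (ZMod p)) (RatFunc (ZMod p)) f
    with hfR
  have hfRne : fR ≠ 0 := RatFunc.algebraMap_ne_zero hf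
  have hXn : ((RatFunc.X : RatFunc (ZMod p)) ^ n) ≠ 0 := pow_ne_zero n RatFunc.X_ne_zero
  set y : RatFunc (ZMod p) := fR / RatFunc.X ^ n with hy
  have hyne : y ≠ 0 := div_ne_zero hfRne hXn
  have hyd : y.intDegree = 0 := by
    rw [hy, div_eq_mul_inv, RatFunc.intDegree_mul hfRne (inv_ne_zero hXn),
      aux_intDegree_inv p hXn, aux_intDegree_X_pow, hfR, RatFunc.intDegree_polynomial]
    omega
  have hkey : algebraMap (Polynomial (ZMod p)) K f =
      algebraMap (RatFunc (ZMod p)) K y * (tK p K) ^ n := by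
    rw [hy, map_div₀, map_pow]
    have htX : algebraMap (RatFunc (ZMod p)) K RatFunc.X = tK p K := rfl
    rw [htX, div_mul_cancel₀ _ (pow_ne_zero n (aux_tK_ne_zero p K)), hfR,
      ← IsScalarTower.algebraMap_apply]
  have hyKne : algebraMap (RatFunc (ZMod p)) K y ≠ 0 := by simpa using hyne
  rw [hkey, I.ord_mul i _ _ hyKne (pow_ne_zero n (aux_tK_ne_zero p K)),
    aux_ord_of_intDegree_zero p K I i hyne hyd, aux_ord_pow p K I i (aux_tK_ne_zero p K)]
  ring

/-- **Lemma (Claim B).** Let `a, b ∈ Kˣ` with `ord_{∞_i}(b) ≤ C₁` for every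
infinite place, and let `q_1, …, q_{2s_∞+1} ∈ 𝔽_p[t]` be irreducible polynomials
with pairwise distinct degrees and `ord_∞(q_j - q_ℓ) < -2C₁` for `j ≠ ℓ`. Then
there is an index `j₀` such that, for every infinite place `∞_i`,
`ord_{∞_i}(a) ≠ ord_{∞_i}(b·q_{j₀})` and `ord_{∞_i}(a + b·q_{j₀}) ≤ 0`. -/
theorem exists_good_index_at_infinity (hp2 : p ≠ 2) (I : InfData p K)
    (C₁ : ℕ) (a b : K) (ha : a ≠ 0) (hb : b ≠ 0)
    (hbord : ∀ i : Fin I.s, I.ord i b ≤ (C₁ : ℤ))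
    (Q : Fin (2 * I.s + 1) → Polynomial (ZMod p))
    (hQirr : ∀ j, Irreducible (Q j))
    (hQdeg : ∀ j j', j ≠ j' → (Q j).natDegree ≠ (Q j').natDegree)
    (hQdiff : ∀ j j', j ≠ j' → 2 * C₁ < (Q j - Q j').natDegree) :
    ∃ j₀ : Fin (2 * I.s + 1), ∀ i : Fin I.s,
      I.ord i a ≠ I.ord i (b * algebraMap (Polynomial (ZMod p)) K (Q j₀)) ∧
      I.ord i (a + b * algebraMap (Polynomial (ZMod p)) K (Q j₀)) ≤ 0 := by
  classical
  have hQ0 : ∀ j, Q j ≠ 0 := fun j => (hQirr j).ne_zero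
  set A : Fin (2 * I.s + 1) → K := fun j => algebraMap (Polynomial (ZMod p)) K (Q j) with hA
  have hAne : ∀ j, A j ≠ 0 := fun j => aux_algK_ne_zero p K (hQ0 j)
  have hbAne : ∀ j, b * A j ≠ 0 := fun j => mul_ne_zero hb (hAne j)
  have hordA : ∀ (i : Fin I.s) j,
      I.ord i (A j) = ((Q j).natDegree : ℤ) * I.ord i (tK p K) :=
    fun i j => aux_ord_algK p K I i (hQ0 j)
  have hE : ∀ i : Fin I.s, I.ord i (tK p K) ≤ -1 := aux_ord_tK p K I
  -- the two families of bad sets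
  set B1 : Fin I.s → Finset (Fin (2 * I.s + 1)) := fun i =>
    Finset.univ.filter fun j => I.ord i a = I.ord i (b * A j) with hB1
  set B2 : Fin I.s → Finset (Fin (2 * I.s + 1)) := fun i =>
    Finset.univ.filter fun j =>
      a + b * A j ≠ 0 ∧ 0 < I.ord i (a + b * A j) with hB2
  have hB1card : ∀ i, (B1 i).card ≤ 1 := by
    intro i
    rw [Finset.card_le_one]
    intro j hj l hl
    rw [hB1, Finset.mem_filter] at hj hl
    by_contra hne
    have hj' := hj.2; have hl' := hl.2
    rw [I.ord_mul i b (A j) hb (hAne j), hordA i j] at hj'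
    rw [I.ord_mul i b (A l) hb (hAne l), hordA i l] at hl'
    have hdeg : ((Q j).natDegree : ℤ) * I.ord i (tK p K) =
        ((Q l).natDegree : ℤ) * I.ord i (tK p K) := by omega
    have hEne : I.ord i (tK p K) ≠ 0 := by have := hE i; omega
    have := mul_right_cancel₀ hEne hdeg
    exact hQdeg j l hne (by exact_mod_cast this)
  have hB2card : ∀ i, (B2 i).card ≤ 1 := by
    intro i
    rw [Finset.card_le_one]
    intro j hj l hl
    rw [hB2, Finset.mem_filter] at hj hl
    by_contra hne
    obtain ⟨hjz, hjpos⟩ := hj.2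
    obtain ⟨hlz, hlpos⟩ := hl.2
    -- the difference
    have hQne : Q j - Q l ≠ 0 := by
      intro h
      exact hQdeg j l hne (by rw [sub_eq_zero] at h; rw [h])
    have hAdiff : A j - A l = algebraMap (Polynomial (ZMod p)) K (Q j - Q l) := by
      rw [map_sub]
    have hdne : (a + b * A j) - (a + b * A l) ≠ 0 := by
      have : (a + b * A j) - (a + b * A l) = b * algebraMap _ K (Q j - Q l) := by
        rw [← hAdiff]; ring
      rw [this]
      exact mul_ne_zero hb (aux_algK_ne_zero p K hQne)
    have hlow : I.ord i ((a + b * A j) - (a + b * A l)) ≤ - (1 : ℤ) - C₁ := by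
      have heq : (a + b * A j) - (a + b * A l) = b * algebraMap _ K (Q j - Q l) := by
        rw [← hAdiff]; ring
      rw [heq, I.ord_mul i b _ hb (aux_algK_ne_zero p K hQne),
        aux_ord_algK p K I i hQne]
      have hd : (2 * (C₁ : ℤ) + 1) ≤ ((Q j - Q l).natDegree : ℤ) := by
        have := hQdiff j l hne; omega
      have hEi := hE i
      have : ((Q j - Q l).natDegree : ℤ) * I.ord i (tK p K) ≤
          - ((Q j - Q l).natDegree : ℤ) := by
        nlinarith
      have hb' := hbord i
      omega
    have hhigh : 0 < I.ord i ((a + b * A j) - (a + b * A l)) := by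
      have hnl : -(a + b * A l) ≠ 0 := neg_ne_zero.mpr hlz
      have := I.ord_add i (a + b * A j) (-(a + b * A l)) hjz hnl
        (by rwa [← sub_eq_add_neg])
      rw [← sub_eq_add_neg] at this
      rw [aux_ord_neg p K I i hlz] at this
      omega
    omega
  set T : Finset (Fin (2 * I.s + 1)) := Finset.univ.biUnion (fun i => B1 i ∪ B2 i) with hT
  have hTcard : T.card ≤ 2 * I.s := by
    calc T.card ≤ ∑ i : Fin I.s, (B1 i ∪ B2 i).card := Finset.card_biUnion_le
      _ ≤ ∑ _i : Fin I.s, 2 := Finset.sum_le_sum (fun i _ =>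
          le_trans (Finset.card_union_le _ _) (by have := hB1card i; have := hB2card i; omega))
      _ = 2 * I.s := by simp [mul_comm]
  have hex : ∃ j : Fin (2 * I.s + 1), j ∉ T := by
    by_contra h
    push_neg at h
    have : (Finset.univ : Finset (Fin (2 * I.s + 1))).card ≤ T.card :=
      Finset.card_le_card (fun j _ => h j)
    rw [Finset.card_univ, Fintype.card_fin] at this
    omega
  obtain ⟨j₀, hj₀⟩ := hex
  have h1 : ∀ i, j₀ ∉ B1 i := fun i h =>
    hj₀ (Finset.mem_biUnion.mpr ⟨i, Finset.mem_univ i, Finset.mem_union_left _ h⟩)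
  have h2 : ∀ i, j₀ ∉ B2 i := fun i h =>
    hj₀ (Finset.mem_biUnion.mpr ⟨i, Finset.mem_univ i, Finset.mem_union_right _ h⟩)
  refine ⟨j₀, fun i => ⟨?_, ?_⟩⟩
  · intro heq
    exact h1 i (by rw [hB1, Finset.mem_filter]; exact ⟨Finset.mem_univ _, heq⟩)
  · by_contra hpos
    push_neg at hpos
    by_cases hz : a + b * A j₀ = 0
    · apply h1 i
      rw [hB1, Finset.mem_filter]
      refine ⟨Finset.mem_univ _, ?_⟩
      have : b * A j₀ = -a := by linear_combination hz
      rw [this, aux_ord_neg p K I i ha]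
    · exact h2 i (by
        rw [hB2, Finset.mem_filter]
        exact ⟨Finset.mem_univ _, hz, hpos⟩)
end FunctionFieldSetting


end Paper
end
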